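/- In the construction embedding bounded 1-marginal (r,c,h)-arrays into (3, rc, r+c+h)-arrays, if y is a nonnegative real array satisfying the constructed 2-marginals and x is defined by x_{i,j,k} := y_{1,ij,dom k}, then x satisfies 0 ≤ x_{i,j,k} ≤ p_{i,j,k} for all i,j,k, and its 1-marginals equal the prescribed values u_{i,+,+}, u_{+,j,+}, u_{+,+,k}. -/
import Mathlib


/-- `U = min (max_i u1 i) (max_j u2 j)` of the Theorem 1.4 construction. -/
def bigU (r c : ℕ) (u1 : Fin r → ℕ) (u2 : Fin c → ℕ) : ℕ :=
  min (Finset.univ.sup u1) (Finset.univ.sup u2)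

open Sum in
/-- `v_{+,ij,gro k}` of the Theorem 1.4 construction. -/
def margA (r c h : ℕ) (u1 : Fin r → ℕ) (u2 : Fin c → ℕ)
    (p : Fin r → Fin c → Fin h → ℕ) :
    Fin r × Fin c → (Fin h ⊕ Fin r ⊕ Fin c) → ℝ := fun a g =>
  match g with
  | inl k => (p a.1 a.2 k : ℝ)
  | inr (inl i) => if i = a.1 then (bigU r c u1 u2 : ℝ) else 0
  | inr (inr j) => if j = a.2 then (bigU r c u1 u2 : ℝ) else 0

/-- `v_{t,ij,+}` of the Theorem 1.4 construction. -/
def margT (r c h : ℕ) (u1 : Fin r → ℕ) (u2 : Fin c → ℕ)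
    (p : Fin r → Fin c → Fin h → ℕ) :
    Fin 3 → Fin r × Fin c → ℝ := fun t a =>
  if t = 1 then ∑ k, (p a.1 a.2 k : ℝ) else (bigU r c u1 u2 : ℝ)

open Sum in
/-- `v_{t,+,gro k}` of the Theorem 1.4 construction. -/
def margG (r c h : ℕ) (u1 : Fin r → ℕ) (u2 : Fin c → ℕ) (u3 : Fin h → ℕ)
    (p : Fin r → Fin c → Fin h → ℕ) :
    Fin 3 → (Fin h ⊕ Fin r ⊕ Fin c) → ℝ := fun t g =>
  match g with
  | inl k => if t = 0 then (u3 k : ℝ)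
      else if t = 1 then (∑ i, ∑ j, (p i j k : ℝ)) - (u3 k : ℝ) else 0
  | inr (inl i) => if t = 0 then (c : ℝ) * (bigU r c u1 u2 : ℝ) - (u1 i : ℝ)
      else if t = 1 then 0 else (u1 i : ℝ)
  | inr (inr j) => if t = 0 then 0
      else if t = 1 then (u2 j : ℝ)
      else (r : ℝ) * (bigU r c u1 u2 : ℝ) - (u2 j : ℝ)

open Sum in
/-- In the Theorem 1.4 construction, the black block of any nonnegative real
array with the constructed 2-marginals obeys the original bounds and
1-marginals. -/
theorem black_block_feasible (r c h : ℕ)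
    (u1 : Fin r → ℕ) (u2 : Fin c → ℕ) (u3 : Fin h → ℕ)
    (p : Fin r → Fin c → Fin h → ℕ)
    (y : Fin 3 → Fin r × Fin c → (Fin h ⊕ Fin r ⊕ Fin c) → ℝ)
    (hnn : ∀ t a g, 0 ≤ y t a g)
    (hT : ∀ t a, ∑ g, y t a g = margT r c h u1 u2 p t a)
    (hG : ∀ t g, ∑ a, y t a g = margG r c h u1 u2 u3 p t g)
    (hA : ∀ a g, ∑ t, y t a g = margA r c h u1 u2 p a g) :
    (∀ i j k, 0 ≤ y 0 (i, j) (inl k)) ∧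
    (∀ i j k, y 0 (i, j) (inl k) ≤ (p i j k : ℝ)) ∧
    (∀ i, ∑ j, ∑ k, y 0 (i, j) (inl k) = (u1 i : ℝ)) ∧
    (∀ j, ∑ i, ∑ k, y 0 (i, j) (inl k) = (u2 j : ℝ)) ∧
    (∀ k, ∑ i, ∑ j, y 0 (i, j) (inl k) = (u3 k : ℝ)) := by
  set U : ℝ := (bigU r c u1 u2 : ℝ) with hUdef
  -- layer 2 dom cells vanish
  have h2dom : ∀ a k, y 2 a (inl k) = 0 := by
    intro a k
    have h : ∑ a, y 2 a (inl k) = 0 := by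
      rw [hG]; simp [margG]
    exact (Finset.sum_eq_zero_iff_of_nonneg
      (fun a _ => hnn 2 a (inl k))).mp h a (Finset.mem_univ a)
  -- layer 0 col cells vanish
  have h0col : ∀ a j', y 0 a (inr (inr j')) = 0 := by
    intro a j'
    have h : ∑ a, y 0 a (inr (inr j')) = 0 := by
      rw [hG]; simp [margG]
    exact (Finset.sum_eq_zero_iff_of_nonneg
      (fun a _ => hnn 0 a (inr (inr j')))).mp h a (Finset.mem_univ a)
  -- layer 1 row cells vanish
  have h1row : ∀ a i', y 1 a (inr (inl i')) = 0 := by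
    intro a i'
    have h : ∑ a, y 1 a (inr (inl i')) = 0 := by
      rw [hG]; simp [margG]
    exact (Finset.sum_eq_zero_iff_of_nonneg
      (fun a _ => hnn 1 a (inr (inl i')))).mp h a (Finset.mem_univ a)
  -- off-diagonal row cells vanish (all layers)
  have hrowoff : ∀ t (i : Fin r) (j : Fin c) (i' : Fin r), i' ≠ i →
      y t (i, j) (inr (inl i')) = 0 := by
    intro t i j i' hne
    have h : ∑ t, y t (i, j) (inr (inl i')) = 0 := by
      rw [hA]; simp [margA, hne]
    exact (Finset.sum_eq_zero_iff_of_nonneg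
      (fun t _ => hnn t (i, j) (inr (inl i')))).mp h t (Finset.mem_univ t)
  -- off-diagonal col cells vanish (all layers)
  have hcoloff : ∀ t (i : Fin r) (j : Fin c) (j' : Fin c), j' ≠ j →
      y t (i, j) (inr (inr j')) = 0 := by
    intro t i j j' hne
    have h : ∑ t, y t (i, j) (inr (inr j')) = 0 := by
      rw [hA]; simp [margA, hne]
    exact (Finset.sum_eq_zero_iff_of_nonneg
      (fun t _ => hnn t (i, j) (inr (inr j')))).mp h t (Finset.mem_univ t)
  -- pointwise: y0 + y1 = p on dom cells
  have hpt : ∀ (i : Fin r) (j : Fin c) (k : Fin h),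
      y 0 (i, j) (inl k) + y 1 (i, j) (inl k) = (p i j k : ℝ) := by
    intro i j k
    have h := hA (i, j) (inl k)
    rw [Fin.sum_univ_three] at h
    rw [h2dom (i, j) k] at h
    simp only [margA] at h
    linarith
  -- per-cell equation, layer 0
  have hcell0 : ∀ (i : Fin r) (j : Fin c),
      (∑ k, y 0 (i, j) (inl k)) + y 0 (i, j) (inr (inl i)) = U := by
    intro i j
    have h := hT 0 (i, j)
    rw [Fintype.sum_sum_type, Fintype.sum_sum_type] at h
    rw [Finset.sum_eq_single i (fun i' _ hne => hrowoff 0 i j i' hne)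
      (fun hmem => absurd (Finset.mem_univ i) hmem)] at h
    rw [Finset.sum_eq_zero (fun j' _ => h0col (i, j) j')] at h
    simp only [margT] at h
    norm_num at h
    linarith
  -- per-cell equation, layer 1
  have hcell1 : ∀ (i : Fin r) (j : Fin c),
      (∑ k, y 1 (i, j) (inl k)) + y 1 (i, j) (inr (inr j))
        = ∑ k, (p i j k : ℝ) := by
    intro i j
    have h := hT 1 (i, j)
    rw [Fintype.sum_sum_type, Fintype.sum_sum_type] at h
    rw [Finset.sum_eq_zero (fun i' _ => h1row (i, j) i')] at h
    rw [Finset.sum_eq_single j (fun j' _ hne => hcoloff 1 i j j' hne)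
      (fun hmem => absurd (Finset.mem_univ j) hmem)] at h
    simp only [margT] at h
    norm_num at h
    linarith
  -- row aggregate for layer 0
  have hrowsum : ∀ i : Fin r,
      ∑ j, y 0 (i, j) (inr (inl i)) = (c : ℝ) * U - (u1 i : ℝ) := by
    intro i
    have h := hG 0 (inr (inl i))
    rw [Fintype.sum_prod_type] at h
    rw [Finset.sum_eq_single i
      (fun i' _ hne => Finset.sum_eq_zero
        (fun j _ => hrowoff 0 i' j i (Ne.symm hne)))
      (fun hmem => absurd (Finset.mem_univ i) hmem)] at h
    simpa [margG] using h
  -- col aggregate for layer 1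
  have hcolsum : ∀ j : Fin c,
      ∑ i, y 1 (i, j) (inr (inr j)) = (u2 j : ℝ) := by
    intro j
    have h := hG 1 (inr (inr j))
    rw [Fintype.sum_prod_type] at h
    have h' : ∀ i : Fin r, ∑ j', y 1 (i, j') (inr (inr j))
        = y 1 (i, j) (inr (inr j)) := by
      intro i
      exact Finset.sum_eq_single j
        (fun j' _ hne => hcoloff 1 i j' j (Ne.symm hne))
        (fun hmem => absurd (Finset.mem_univ j) hmem)
    rw [Finset.sum_congr rfl (fun i _ => h' i)] at h
    simpa [margG] using h
  refine ⟨fun i j k => hnn 0 (i, j) (inl k), ?_, ?_, ?_, ?_⟩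
  · intro i j k
    have := hpt i j k
    have := hnn 1 (i, j) (inl k)
    linarith
  · intro i
    have : ∑ j, ((∑ k, y 0 (i, j) (inl k)) + y 0 (i, j) (inr (inl i)))
        = (c : ℝ) * U := by
      rw [Finset.sum_congr rfl (fun j _ => hcell0 i j)]
      simp [mul_comm]
    rw [Finset.sum_add_distrib, hrowsum i] at this
    linarith
  · intro j
    have h1 : ∑ i, ((∑ k, y 1 (i, j) (inl k)) + y 1 (i, j) (inr (inr j)))
        = ∑ i, ∑ k, (p i j k : ℝ) :=
      Finset.sum_congr rfl (fun i _ => hcell1 i j)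
    rw [Finset.sum_add_distrib, hcolsum j] at h1
    have h0 : ∑ i, ∑ k, y 0 (i, j) (inl k)
        = (∑ i, ∑ k, (p i j k : ℝ)) - ∑ i, ∑ k, y 1 (i, j) (inl k) := by
      rw [eq_sub_iff_add_eq, ← Finset.sum_add_distrib]
      refine Finset.sum_congr rfl (fun i _ => ?_)
      rw [← Finset.sum_add_distrib]
      exact Finset.sum_congr rfl (fun k _ => hpt i j k)
    rw [h0]; linarith
  · intro k
    have h := hG 0 (inl k)
    rw [Fintype.sum_prod_type] at h
    simpa [margG] using h
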